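/- Let ℓ be a prime and p an integer not divisible by ℓ. Then the limit as r → ∞ of φ(ℓ^r)·#{σ ∈ GL₂(ℤ/ℓ^r ℤ) : det σ ≡ p (mod ℓ^r), σ ≡ I (mod ℓ)} / |GL₂(ℤ/ℓ^r ℤ)| equals 1/(ℓ(ℓ²−1)) if ℓ | (p−1), and equals 0 otherwise. In fact for each r ≥ 1 the ratio is already equal to this value. -/

import Mathlib

open Matrix

open Classical in
/-- The ratio `φ(ℓ^r)·#{σ ∈ GL₂(ℤ/ℓ^r ℤ) : det σ ≡ p (mod ℓ^r), σ ≡ I (mod ℓ)} /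
|GL₂(ℤ/ℓ^r ℤ)|`. -/
noncomputable def glRatio (ℓ : ℕ) [NeZero ℓ] (p : ℤ) (r : ℕ) : ℝ :=
  (Nat.totient (ℓ ^ r) *
      Fintype.card {σ : Matrix.GeneralLinearGroup (Fin 2) (ZMod (ℓ ^ r)) //
        (σ : Matrix (Fin 2) (Fin 2) (ZMod (ℓ ^ r))).det = (p : ZMod (ℓ ^ r)) ∧
        ∀ i j, (((σ : Matrix (Fin 2) (Fin 2) (ZMod (ℓ ^ r))) i j).val : ZMod ℓ) =
          (1 : Matrix (Fin 2) (Fin 2) (ZMod ℓ)) i j} : ℝ) /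
    (Fintype.card (Matrix.GeneralLinearGroup (Fin 2) (ZMod (ℓ ^ r))) : ℝ)

/-- card of a group = card of kernel times card of range, for a hom out of a finite group. -/
private lemma aux_card_ker_mul_card_range {G H : Type*} [Group G] [Group H] [Finite G]
    (f : G →* H) : Nat.card f.ker * Nat.card f.range = Nat.card G := by
  rw [Subgroup.card_eq_card_quotient_mul_card_subgroup f.ker,
    Nat.card_congr (QuotientGroup.quotientKerEquivRange f).toEquiv, mul_comm]

/-- Fibers of a group hom over elements of the range all have the cardinality of the kernel. -/
private lemma aux_card_fiber {G H : Type*} [Group G] [Group H] (f : G →* H) {a : H}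
    (ha : a ∈ f.range) : Nat.card {g // f g = a} = Nat.card f.ker := by
  obtain ⟨g₀, hg₀⟩ := ha
  refine Nat.card_congr
    { toFun := fun x => ⟨g₀⁻¹ * x.1, by
        rw [MonoidHom.mem_ker, _root_.map_mul, _root_.map_inv, hg₀, x.2, inv_mul_cancel]⟩
      invFun := fun k => ⟨g₀ * k.1, by
        have hk := k.2
        rw [MonoidHom.mem_ker] at hk
        rw [_root_.map_mul, hk, hg₀, mul_one]⟩
      left_inv := fun x => by simp
      right_inv := fun k => by simp }

/-- A diagonal element of `GL₂` with determinant `u`. -/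
private def diagGL {R : Type*} [CommRing R] (u : Rˣ) : GL (Fin 2) R where
  val := Matrix.diagonal ![(u : R), 1]
  inv := Matrix.diagonal ![((u⁻¹ : Rˣ) : R), 1]
  val_inv := by
    ext i j
    fin_cases i <;> fin_cases j <;>
      simp [Matrix.mul_apply, Fin.sum_univ_two, Matrix.one_apply]
  inv_val := by
    ext i j
    fin_cases i <;> fin_cases j <;>
      simp [Matrix.mul_apply, Fin.sum_univ_two, Matrix.one_apply]

private lemma diagGL_det {R : Type*} [CommRing R] (u : Rˣ) :
    ((diagGL u : GL (Fin 2) R) : Matrix (Fin 2) (Fin 2) R).det = (u : R) := by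
  simp [diagGL, Matrix.det_diagonal, Fin.prod_univ_two]

set_option maxHeartbeats 2000000

theorem glRatio_eq (ℓ : ℕ) (hℓ : ℓ.Prime) [NeZero ℓ] (p : ℤ) (hp : ¬ (ℓ : ℤ) ∣ p) :
    (∀ r : ℕ, 1 ≤ r →
      glRatio ℓ p r =
        if (ℓ : ℤ) ∣ p - 1 then 1 / ((ℓ : ℝ) * ((ℓ : ℝ) ^ 2 - 1)) else 0) ∧
    Filter.Tendsto (glRatio ℓ p) Filter.atTop
      (nhds (if (ℓ : ℤ) ∣ p - 1 then 1 / ((ℓ : ℝ) * ((ℓ : ℝ) ^ 2 - 1)) else 0)) := by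
  haveI : Fact ℓ.Prime := ⟨hℓ⟩
  have hℓ2 : 2 ≤ ℓ := hℓ.two_le
  have key : ∀ r : ℕ, 1 ≤ r →
      glRatio ℓ p r =
        if (ℓ : ℤ) ∣ p - 1 then 1 / ((ℓ : ℝ) * ((ℓ : ℝ) ^ 2 - 1)) else 0 := by
    intro r hr
    haveI : NeZero (ℓ ^ r) := ⟨pow_ne_zero r (NeZero.ne ℓ)⟩
    have h : ℓ ∣ ℓ ^ r := dvd_pow_self ℓ (by omega)
    set f : ZMod (ℓ ^ r) →+* ZMod ℓ := ZMod.castHom h _ with hf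
    set Θ : GL (Fin 2) (ZMod (ℓ ^ r)) →* GL (Fin 2) (ZMod ℓ) :=
      Units.map (f.mapMatrix).toMonoidHom with hΘ
    set d : Θ.ker →* (ZMod (ℓ ^ r))ˣ :=
      (Matrix.GeneralLinearGroup.det).comp ((Θ.ker).subtype) with hd
    -- basic translations
    have hfval : ∀ a : ZMod (ℓ ^ r), ((a.val : ℕ) : ZMod ℓ) = f a := fun a => by
      rw [ZMod.natCast_val, ZMod.castHom_apply]
    have hΘval : ∀ σ : GL (Fin 2) (ZMod (ℓ ^ r)),
        ((Θ σ : GL (Fin 2) (ZMod ℓ)) : Matrix (Fin 2) (Fin 2) (ZMod ℓ)) =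
          (σ : Matrix (Fin 2) (Fin 2) (ZMod (ℓ ^ r))).map f := fun σ => rfl
    have hmem : ∀ σ : GL (Fin 2) (ZMod (ℓ ^ r)),
        (∀ i j, (((σ : Matrix (Fin 2) (Fin 2) (ZMod (ℓ ^ r))) i j).val : ZMod ℓ) =
          (1 : Matrix (Fin 2) (Fin 2) (ZMod ℓ)) i j) ↔ σ ∈ Θ.ker := by
      intro σ
      rw [MonoidHom.mem_ker, Units.ext_iff, hΘval, Units.val_one]
      constructor
      · intro hσ
        ext i j
        rw [Matrix.map_apply, ← hfval, hσ]
      · intro hσ i j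
        rw [hfval, ← Matrix.map_apply (f := f), hσ]
    -- det of an element of the kernel reduces to 1 mod ℓ
    have hdet1 : ∀ σ : GL (Fin 2) (ZMod (ℓ ^ r)), σ ∈ Θ.ker →
        f ((σ : Matrix (Fin 2) (Fin 2) (ZMod (ℓ ^ r))).det) = 1 := by
      intro σ hσ
      rw [MonoidHom.mem_ker] at hσ
      rw [RingHom.map_det, RingHom.mapMatrix_apply, ← hΘval, hσ, Units.val_one, Matrix.det_one]
    -- lifting units along f
    have hUnitLift : ∀ a : ZMod (ℓ ^ r), IsUnit (f a) → IsUnit a := by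
      intro a ha
      rw [← hfval, ZMod.isUnit_iff_coprime] at ha
      rw [← ZMod.natCast_zmod_val a, ZMod.isUnit_iff_coprime]
      exact ha.pow_right r
    -- surjectivity of Θ
    have surjΘ : Function.Surjective Θ := by
      intro M
      set A : Matrix (Fin 2) (Fin 2) (ZMod (ℓ ^ r)) :=
        Matrix.of fun i j => (((M : Matrix (Fin 2) (Fin 2) (ZMod ℓ)) i j).val :
          ZMod (ℓ ^ r)) with hA
      have hmap : A.map f = (M : Matrix (Fin 2) (Fin 2) (ZMod ℓ)) := by
        ext i j
        rw [Matrix.map_apply, hA]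
        simp only [Matrix.of_apply]
        rw [map_natCast, ZMod.natCast_zmod_val]
      have hdet : IsUnit A.det := by
        apply hUnitLift
        rw [RingHom.map_det, RingHom.mapMatrix_apply, hmap]
        exact (Matrix.isUnit_iff_isUnit_det _).mp M.isUnit
      have hAunit : IsUnit A := (Matrix.isUnit_iff_isUnit_det _).mpr hdet
      refine ⟨hAunit.unit, Units.ext ?_⟩
      rw [hΘval]
      rw [IsUnit.unit_spec]
      exact hmap
    -- range of d is the kernel of unitsMap
    have hdrange : d.range = (ZMod.unitsMap h).ker := by
      ext u
      constructor
      · rintro ⟨σ, rfl⟩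
        rw [MonoidHom.mem_ker, Units.ext_iff, Units.val_one]
        have : ((ZMod.unitsMap h) (d σ) : ZMod ℓ) =
            f (((σ : GL (Fin 2) (ZMod (ℓ ^ r))) :
              Matrix (Fin 2) (Fin 2) (ZMod (ℓ ^ r))).det) := rfl
        rw [this, hdet1 _ σ.2]
      · intro hu
        rw [MonoidHom.mem_ker, Units.ext_iff, Units.val_one] at hu
        have hfu : f (u : ZMod (ℓ ^ r)) = 1 := hu
        have hker : diagGL u ∈ Θ.ker := by
          rw [MonoidHom.mem_ker, Units.ext_iff, hΘval, Units.val_one]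
          show (Matrix.diagonal ![(u : ZMod (ℓ ^ r)), 1]).map f = 1
          rw [Matrix.diagonal_map (map_zero f)]
          ext i j
          fin_cases i <;> fin_cases j <;>
            simp [Matrix.diagonal_apply, Matrix.one_apply, hfu]
        refine ⟨⟨diagGL u, hker⟩, Units.ext ?_⟩
        show ((diagGL u : GL (Fin 2) (ZMod (ℓ ^ r))) :
          Matrix (Fin 2) (Fin 2) (ZMod (ℓ ^ r))).det = (u : ZMod (ℓ ^ r))
        exact diagGL_det u
    -- cardinality identities
    have hcGL : Nat.card (GL (Fin 2) (ZMod ℓ)) = (ℓ ^ 2 - 1) * (ℓ ^ 2 - ℓ) := by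
      rw [Matrix.card_GL_field]
      simp [Fin.prod_univ_two, ZMod.card]
    have hrange : Θ.range = ⊤ := MonoidHom.range_eq_top.mpr surjΘ
    have Eq1 : Nat.card Θ.ker * Nat.card (GL (Fin 2) (ZMod ℓ)) =
        Nat.card (GL (Fin 2) (ZMod (ℓ ^ r))) := by
      have := aux_card_ker_mul_card_range Θ
      rwa [hrange, Nat.card_congr Subgroup.topEquiv.toEquiv] at this
    have Eq2 : Nat.card d.ker * Nat.card ((ZMod.unitsMap h).ker) = Nat.card Θ.ker := by
      have := aux_card_ker_mul_card_range d
      rwa [hdrange] at this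
    have Eq3 : Nat.card ((ZMod.unitsMap h).ker) * (ℓ - 1) = Nat.totient (ℓ ^ r) := by
      have := aux_card_ker_mul_card_range (ZMod.unitsMap h)
      rw [MonoidHom.range_eq_top.mpr (ZMod.unitsMap_surjective h)] at this
      rw [Nat.card_congr Subgroup.topEquiv.toEquiv] at this
      simpa [Nat.card_eq_fintype_card, ZMod.card_units_eq_totient, Nat.totient_prime hℓ]
        using this
    by_cases hcase : (ℓ : ℤ) ∣ p - 1
    · -- main case
      rw [if_pos hcase]
      have hfp : f ((p : ℤ) : ZMod (ℓ ^ r)) = 1 := by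
        have h0 : ((p - 1 : ℤ) : ZMod ℓ) = 0 := (ZMod.intCast_zmod_eq_zero_iff_dvd _ _).mpr hcase
        push_cast at h0
        rw [map_intCast]
        linear_combination h0
      have hpu : IsUnit ((p : ℤ) : ZMod (ℓ ^ r)) := by
        apply hUnitLift
        rw [hfp]
        exact isUnit_one
      -- u_p is in the range of d
      have hmemrange : hpu.unit ∈ d.range := by
        rw [hdrange, MonoidHom.mem_ker, Units.ext_iff, Units.val_one]
        show f ((hpu.unit : ZMod (ℓ ^ r))) = 1
        rw [IsUnit.unit_spec, hfp]
      -- the subtype is equivalent to the fiber of d over hpu.unit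
      have hSequiv : Nat.card {σ : Matrix.GeneralLinearGroup (Fin 2) (ZMod (ℓ ^ r)) //
          (σ : Matrix (Fin 2) (Fin 2) (ZMod (ℓ ^ r))).det = (p : ZMod (ℓ ^ r)) ∧
          ∀ i j, (((σ : Matrix (Fin 2) (Fin 2) (ZMod (ℓ ^ r))) i j).val : ZMod ℓ) =
            (1 : Matrix (Fin 2) (Fin 2) (ZMod ℓ)) i j} =
          Nat.card {x : Θ.ker // d x = hpu.unit} := by
        refine Nat.card_congr
          { toFun := fun σ => ⟨⟨σ.1, (hmem σ.1).mp σ.2.2⟩, Units.ext ?_⟩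
            invFun := fun x => ⟨x.1.1, ?_, (hmem x.1.1).mpr x.1.2⟩
            left_inv := fun σ => rfl
            right_inv := fun x => by
              ext
              rfl }
        · rw [IsUnit.unit_spec]
          exact σ.2.1
        · have := congrArg Units.val x.2
          rw [IsUnit.unit_spec] at this
          exact this
      rw [glRatio]
      simp only [← Nat.card_eq_fintype_card]
      rw [hSequiv, aux_card_fiber d hmemrange, ← Eq1, ← Eq2, ← Eq3, hcGL]
      -- now pure real arithmetic
      have ha : 0 < Nat.card d.ker := Nat.card_pos
      have hb : 0 < Nat.card ((ZMod.unitsMap h).ker) := Nat.card_pos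
      have h1 : (1 : ℕ) ≤ ℓ ^ 2 := by nlinarith
      have h2 : ℓ ≤ ℓ ^ 2 := by nlinarith
      have h3 : (1 : ℕ) ≤ ℓ := by omega
      push_cast [Nat.cast_sub h1, Nat.cast_sub h2, Nat.cast_sub h3]
      have hℓR : (2 : ℝ) ≤ (ℓ : ℝ) := by exact_mod_cast hℓ2
      have haR : (0 : ℝ) < (Nat.card d.ker : ℝ) := by exact_mod_cast ha
      have hbR : (0 : ℝ) < (Nat.card ((ZMod.unitsMap h).ker) : ℝ) := by exact_mod_cast hb
      rw [div_eq_div_iff]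
      · ring
      · have h4 : (0:ℝ) < (ℓ:ℝ)^2 - 1 := by nlinarith
        have h5 : (0:ℝ) < (ℓ:ℝ)^2 - (ℓ:ℝ) := by nlinarith
        exact ne_of_gt (mul_pos (mul_pos haR hbR) (mul_pos h4 h5))
      · have h4 : (0:ℝ) < (ℓ:ℝ)^2 - 1 := by nlinarith
        exact ne_of_gt (mul_pos (by positivity) h4)
    · -- empty case
      rw [if_neg hcase]
      have hempty : IsEmpty {σ : Matrix.GeneralLinearGroup (Fin 2) (ZMod (ℓ ^ r)) //
          (σ : Matrix (Fin 2) (Fin 2) (ZMod (ℓ ^ r))).det = (p : ZMod (ℓ ^ r)) ∧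
          ∀ i j, (((σ : Matrix (Fin 2) (Fin 2) (ZMod (ℓ ^ r))) i j).val : ZMod ℓ) =
            (1 : Matrix (Fin 2) (Fin 2) (ZMod ℓ)) i j} := by
        refine ⟨fun σ => hcase ?_⟩
        have h1 : f ((σ.1 : Matrix (Fin 2) (Fin 2) (ZMod (ℓ ^ r))).det) = 1 :=
          hdet1 _ ((hmem σ.1).mp σ.2.2)
        rw [σ.2.1, map_intCast] at h1
        have h0 : ((p - 1 : ℤ) : ZMod ℓ) = 0 := by
          push_cast
          rw [h1]
          ring
        exact (ZMod.intCast_zmod_eq_zero_iff_dvd _ _).mp h0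
      haveI := hempty
      classical
      have hc0 : Fintype.card {σ : Matrix.GeneralLinearGroup (Fin 2) (ZMod (ℓ ^ r)) //
          (σ : Matrix (Fin 2) (Fin 2) (ZMod (ℓ ^ r))).det = (p : ZMod (ℓ ^ r)) ∧
          ∀ i j, (((σ : Matrix (Fin 2) (Fin 2) (ZMod (ℓ ^ r))) i j).val : ZMod ℓ) =
            (1 : Matrix (Fin 2) (Fin 2) (ZMod ℓ)) i j} = 0 := Fintype.card_eq_zero
      rw [glRatio, hc0, Nat.cast_zero, mul_zero, zero_div]
  refine ⟨key, ?_⟩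
  apply Filter.Tendsto.congr' _ tendsto_const_nhds
  filter_upwards [Filter.eventually_ge_atTop 1] with r hr
  exact (key r hr).symm
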